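/- Let d ≥ 1, let ζ_d ∈ ℤ_p be a primitive d-th root of unity (p ≡ 1 mod d), and let δ be a ring automorphism of O_K[[T]] of order d over O_K (K a p-adic field) preserving the ideal (T). Then there exists a unit u(T) ∈ O_K[[T]]^* such that δ(u(T)·T) = ζ·u(T)·T, where ζ ∈ O_K^* is the d-th root of unity with δ(T) ≡ ζ T mod T^2·O_K[[T]] up to units. In other words, the parameter T can be replaced by one on which δ acts linearly by a root of unity. -/

import Mathlib

open PowerSeries Finset

private lemma constcoeff_fix {R : Type*} [CommRing R]
    (δ : PowerSeries R ≃ₐ[R] PowerSeries R)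
    (h0 : PowerSeries.constantCoeff (δ PowerSeries.X) = 0)
    (f : PowerSeries R) :
    PowerSeries.constantCoeff (δ f) = PowerSeries.constantCoeff f := by
  conv_lhs => rw [PowerSeries.eq_X_mul_shift_add_const f]
  have hC : δ (PowerSeries.C (PowerSeries.constantCoeff f))
      = PowerSeries.C (PowerSeries.constantCoeff f) := by
    have := δ.commutes (PowerSeries.constantCoeff f)
    simpa [PowerSeries.algebraMap_apply] using this
  rw [map_add, map_mul, hC, map_add, map_mul, h0, zero_mul, zero_add,
    PowerSeries.constantCoeff_C]

/-- Let `R` be a commutative ring (e.g. `O_K` for a `p`-adic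
field `K`, with `d` invertible since `p ≡ 1 mod d`), and let `δ` be an
`R`-algebra automorphism of `R[[T]]` of order `d` preserving the ideal `(T)`.
Then there is a `d`-th root of unity `ζ` with `δ(T) ≡ ζT mod T²` (i.e.
`ζ` is the linear coefficient of `δ(T)`), and a unit `u(T) ∈ R[[T]]ˣ` with
`δ(u(T)·T) = ζ·u(T)·T`: the parameter `T` can be replaced by one on which `δ`
acts linearly by a root of unity. -/
theorem linearize_order_d_automorphism
    (R : Type*) [CommRing R] (d : ℕ) (hd1 : 1 ≤ d)
    (hdunit : IsUnit (d : R))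
    (δ : PowerSeries R ≃ₐ[R] PowerSeries R)
    (horder : orderOf δ = d)
    (hT : δ PowerSeries.X ∈ Ideal.span ({PowerSeries.X} : Set (PowerSeries R))) :
    ∃ ζ : R, ζ ^ d = 1 ∧ IsUnit ζ ∧
      (PowerSeries.coeff 1) (δ PowerSeries.X) = ζ ∧
      ∃ u : PowerSeries R, IsUnit u ∧
        δ (u * PowerSeries.X) = PowerSeries.C ζ * (u * PowerSeries.X) := by
  rw [Ideal.mem_span_singleton] at hT
  obtain ⟨g, hg⟩ := hT
  have hδd : δ ^ d = 1 := by rw [← horder]; exact pow_orderOf_eq_one δ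
  -- constant coefficient of δ X is 0
  have h0 : constantCoeff (δ X) = 0 := by rw [hg]; simp
  have hfix : ∀ f, constantCoeff (δ f) = constantCoeff f := constcoeff_fix δ h0
  have hfixpow : ∀ (k : ℕ) (f : PowerSeries R),
      constantCoeff ((δ ^ k) f) = constantCoeff f := by
    intro k
    induction k with
    | zero => simp
    | succ n ih =>
      intro f
      rw [pow_succ', AlgEquiv.mul_apply, hfix, ih]
  -- δ^k X = X * ∏_{j<k} δ^j g
  have hpow : ∀ k : ℕ, (δ ^ k) X = X * ∏ j ∈ range k, (δ ^ j) g := by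
    intro k
    induction k with
    | zero => simp
    | succ n ih =>
      rw [pow_succ', AlgEquiv.mul_apply, ih, map_mul, hg, map_prod,
        Finset.prod_range_succ']
      have : ∀ j ∈ range n, δ ((δ ^ j) g) = (δ ^ (j + 1)) g := by
        intro j _; rw [pow_succ', AlgEquiv.mul_apply]
      rw [Finset.prod_congr rfl this]
      simp only [pow_zero, AlgEquiv.one_apply]
      ring
  have hXreg : ∀ a b : PowerSeries R, X * a = X * b → a = b := by
    intro a b hab
    ext n
    have := congrArg (coeff (n + 1)) hab
    rwa [coeff_succ_X_mul, coeff_succ_X_mul] at this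
  have hprod1 : ∏ j ∈ range d, (δ ^ j) g = 1 := by
    have := hpow d
    rw [hδd] at this
    simp only [AlgEquiv.one_apply] at this
    exact (hXreg _ _ (by rw [← this, mul_one])).symm
  set ζ := constantCoeff g with hζ
  have hcoeffδX : coeff 1 (δ X) = ζ := by
    rw [hg]
    have := coeff_succ_X_mul 0 g
    simp only [zero_add, coeff_zero_eq_constantCoeff_apply] at this
    exact this
  have hζconst : ∀ j : ℕ, constantCoeff ((δ ^ j) g) = ζ := fun j => hfixpow j g
  have hζd : ζ ^ d = 1 := by
    have := congrArg (constantCoeff) hprod1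
    rw [map_prod] at this
    simp only [hζconst] at this
    simpa [Finset.prod_const, Finset.card_range] using this
  have hζunit : IsUnit ζ := by
    refine IsUnit.of_mul_eq_one (a := ζ) (ζ ^ (d - 1)) ?_
    have h3 : d - 1 + 1 = d := by omega
    rw [← pow_succ', h3, hζd]
  refine ⟨ζ, hζd, hζunit, hcoeffδX, ?_⟩
  obtain ⟨ζu, hζu⟩ := hζunit
  set ζi : R := ((ζu⁻¹ : Rˣ) : R) with hζi
  have hζζi : ζi * ζ = 1 := by rw [hζi, ← hζu]; exact_mod_cast ζu.inv_mul
  set v : PowerSeries R := C ζi * g with hv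
  have hgv : g = C ζ * v := by
    rw [hv, ← mul_assoc, ← map_mul, mul_comm ζ ζi, hζζi, map_one, one_mul]
  have hδC : ∀ (k : ℕ) (r : R), (δ ^ k) (C r) = C r := by
    intro k r
    have := (δ ^ k).commutes r
    simpa [PowerSeries.algebraMap_apply] using this
  have hvconst : ∀ j : ℕ, constantCoeff ((δ ^ j) v) = 1 := by
    intro j
    rw [hv, map_mul, hδC, map_mul, constantCoeff_C, hζconst, hζζi]
  have hζid : ζi ^ d = 1 := by
    have : (ζi * ζ) ^ d = 1 := by rw [hζζi, one_pow]
    rwa [mul_pow, hζd, mul_one] at this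
  have hprodv : ∏ j ∈ range d, (δ ^ j) v = 1 := by
    have : ∀ j ∈ range d, (δ ^ j) v = C ζi * (δ ^ j) g := by
      intro j _; rw [hv, map_mul, hδC]
    rw [Finset.prod_congr rfl this, Finset.prod_mul_distrib, hprod1, mul_one,
      Finset.prod_const, Finset.card_range, ← map_pow, hζid, map_one]
  set P : ℕ → PowerSeries R := fun i => ∏ j ∈ range (i + 1), (δ ^ j) v with hP
  set u : PowerSeries R := ∑ i ∈ range d, P i with hu
  -- key recursion: v * δ (P i) = P (i+1)
  have hkey : ∀ i : ℕ, v * δ (P i) = P (i + 1) := by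
    intro i
    rw [hP]
    simp only [map_prod]
    have h1 : ∀ j ∈ range (i + 1), δ ((δ ^ j) v) = (δ ^ (j + 1)) v := by
      intro j _; rw [pow_succ', AlgEquiv.mul_apply]
    rw [Finset.prod_congr rfl h1, Finset.prod_range_succ' (fun j => (δ ^ j) v) (i + 1)]
    simp only [pow_zero, AlgEquiv.one_apply]
    ring
  have hPd : P d = P 0 := by
    rw [hP]
    simp only
    rw [Finset.prod_range_succ, hprodv, hδd, one_mul]
    simp
  have hvδu : v * δ u = u := by
    rw [hu, map_sum, Finset.mul_sum]
    have : ∑ i ∈ range d, v * δ (P i) = ∑ i ∈ range d, P (i + 1) :=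
      Finset.sum_congr rfl fun i _ => hkey i
    rw [this]
    have h2 : ∑ i ∈ range d, P (i + 1) + P 0 = ∑ i ∈ range d, P i + P d := by
      rw [← Finset.sum_range_succ', ← Finset.sum_range_succ]
    rw [hPd] at h2
    exact add_right_cancel h2
  have huunit : IsUnit u := by
    rw [PowerSeries.isUnit_iff_constantCoeff]
    have : constantCoeff u = (d : R) := by
      rw [hu, map_sum]
      have : ∀ i ∈ range d, constantCoeff (P i) = 1 := by
        intro i _
        rw [hP]
        simp only [map_prod]
        simp only [hvconst, Finset.prod_const_one]
      rw [Finset.sum_congr rfl this]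
      simp
    rw [this]
    exact hdunit
  refine ⟨u, huunit, ?_⟩
  rw [map_mul, hg, hgv]
  calc δ u * (X * (C ζ * v)) = C ζ * ((v * δ u) * X) := by ring
    _ = C ζ * (u * X) := by rw [hvδu]
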